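/- Let {β_l}_{l∈ℕ} be a nonincreasing sequence of nonnegative real numbers, let m₁ and l̄ be nonnegative integers, and let μ₀ > 0 and ς ∈ (1/2, 1) be constants such that β_l ≤ μ₀·max{ l^{(1−ς)/(1−2ς)}, (β_{l−m₁} − β_l)^{(1−ς)/ς} } for all l ≥ max{l̄, m₁}. Then there exists μ̂ > 0 such that β_l ≤ max{μ₀, μ̂^{(1−ς)/(1−2ς)}} · ⌊(l − l̄)/(m₁+1)⌋^{(1−ς)/(1−2ς)} for all l ≥ l̄ + m₁ + 1. -/

import Mathlib

open Real Set

/-- Convexity/MVT bound: for `x ≥ 1` and `e < 0`, `x^e - (x+1)^e ≤ (-e) x^(e-1)`. -/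
lemma aux_bern {x e : ℝ} (hx : 1 ≤ x) (he : e < 0) :
    x ^ e - (x + 1) ^ e ≤ (-e) * x ^ (e - 1) := by
  have hx0 : 0 < x := lt_of_lt_of_le one_pos hx
  obtain ⟨c, hc, hceq⟩ := exists_hasDerivAt_eq_slope (fun t => t ^ e)
      (fun t => e * t ^ (e - 1)) (by linarith : x < x + 1)
      (fun t ht => (Real.continuousAt_rpow_const t e
        (Or.inl (ne_of_gt (lt_of_lt_of_le hx0 ht.1)))).continuousWithinAt)
      (fun t ht => Real.hasDerivAt_rpow_const (Or.inl (ne_of_gt (lt_trans hx0 ht.1))))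
  have hc0 : 0 < c := lt_trans hx0 hc.1
  have : (x + 1) ^ e - x ^ e = e * c ^ (e - 1) := by
    rw [hceq]; field_simp; ring
  have hle : c ^ (e - 1) ≤ x ^ (e - 1) :=
    Real.rpow_le_rpow_of_nonpos hx0 hc.1.le (by linarith)
  nlinarith [Real.rpow_pos_of_pos hc0 (e - 1), Real.rpow_pos_of_pos hx0 (e - 1)]

/-- Lemma 2.2 (from [QianPan23, Lemma 2.7]): a nonincreasing nonnegative sequence
satisfying the mixed recursive bound decays at a sublinear rate. -/
theorem stmt_0 (β : ℕ → ℝ) (hnonneg : ∀ l, 0 ≤ β l) (hmono : ∀ l, β (l + 1) ≤ β l)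
    (m₁ lbar : ℕ) (μ₀ ς : ℝ) (hμ₀ : 0 < μ₀) (hς₁ : 1 / 2 < ς) (hς₂ : ς < 1)
    (hrec : ∀ l : ℕ, max lbar m₁ ≤ l →
      β l ≤ μ₀ * max ((l : ℝ) ^ ((1 - ς) / (1 - 2 * ς)))
        ((β (l - m₁) - β l) ^ ((1 - ς) / ς))) :
    ∃ μhat : ℝ, 0 < μhat ∧ ∀ l : ℕ, lbar + m₁ + 1 ≤ l →
      β l ≤ max μ₀ (μhat ^ ((1 - ς) / (1 - 2 * ς))) *
        (((l - lbar) / (m₁ + 1) : ℕ) : ℝ) ^ ((1 - ς) / (1 - 2 * ς)) := by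
  have hβanti : Antitone β := antitone_nat_of_succ_le hmono
  set e : ℝ := (1 - ς) / (1 - 2 * ς) with he
  set q : ℝ := (1 - ς) / ς with hq
  have hςpos : 0 < ς := by linarith
  have h12ς : 1 - 2 * ς < 0 := by linarith
  have h1ς : 0 < 1 - ς := by linarith
  have hς0 : ς ≠ 0 := ne_of_gt hςpos
  have h2ς0 : (1 : ℝ) - 2 * ς ≠ 0 := ne_of_lt h12ς
  have he_neg : e < 0 := div_neg_of_pos_of_neg h1ς h12ς
  have hq_pos : 0 < q := div_pos h1ς hςpos
  have hq_lt : q < 1 := (div_lt_one hςpos).2 (by linarith)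
  have hkey : (e - 1) * q = e := by
    rw [he, hq]
    field_simp
    have h3 : (1 - ς * 2)⁻¹ * (1 - ς * 2) = 1 :=
      inv_mul_cancel₀ (by contrapose! h2ς0; linarith)
    linear_combination h3
  set X : ℝ := μ₀ * (-e) ^ q * 2 ^ (-e) with hX
  have hXpos : 0 < X :=
    mul_pos (mul_pos hμ₀ (Real.rpow_pos_of_pos (by linarith) q))
      (Real.rpow_pos_of_pos two_pos (-e))
  set M : ℝ := max (max μ₀ (β 0)) (X ^ (1 / (1 - q))) with hM
  have hMμ₀ : μ₀ ≤ M := le_max_of_le_left (le_max_left _ _)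
  have hMβ0 : β 0 ≤ M := le_max_of_le_left (le_max_right _ _)
  have hMpos : 0 < M := lt_of_lt_of_le hμ₀ hMμ₀
  have hMX : X ≤ M ^ (1 - q) := by
    have h1 : X ^ (1 / (1 - q)) ≤ M := le_max_right _ _
    calc X = (X ^ (1 / (1 - q))) ^ (1 - q) := by
          rw [← Real.rpow_mul hXpos.le, one_div,
            inv_mul_cancel₀ (by linarith : (1 : ℝ) - q ≠ 0), Real.rpow_one]
      _ ≤ M ^ (1 - q) := Real.rpow_le_rpow (Real.rpow_nonneg hXpos.le _) h1 (by linarith)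
  -- main claim on the subsequence
  have hγ : ∀ k : ℕ, 1 ≤ k → β (lbar + k * (m₁ + 1)) ≤ M * (k : ℝ) ^ e := by
    intro k hk
    induction k with
    | zero => omega
    | succ k ih =>
      rcases Nat.eq_or_lt_of_le hk with h1 | h1
      · -- base case k+1 = 1
        have hk0 : k = 0 := by omega
        subst hk0
        simpa using (hβanti (Nat.zero_le _)).trans hMβ0
      have hk1 : 1 ≤ k := by omega
      have ihk := ih hk1
      push_cast
      set l := lbar + (k + 1) * (m₁ + 1) with hl
      have hkR : (1 : ℝ) ≤ (k : ℝ) := by exact_mod_cast hk1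
      have hml : max lbar m₁ ≤ l := by
        refine max_le (Nat.le_add_right _ _) ?_
        exact le_trans (le_trans (Nat.le_succ m₁)
          (Nat.le_mul_of_pos_left _ (Nat.succ_pos k))) (Nat.le_add_left _ _)
      have hrecl := hrec l hml
      rcases max_choice ((l : ℝ) ^ e) ((β (l - m₁) - β l) ^ q) with hcase | hcase
      · -- case: bound by l ^ e
        rw [hcase] at hrecl
        have hlk : ((k : ℝ) + 1) ≤ (l : ℝ) := by
          have h2 : k + 1 ≤ l := le_trans
            (Nat.le_mul_of_pos_right _ (Nat.succ_pos m₁)) (Nat.le_add_left _ _)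
          exact_mod_cast h2
        have h3 : (l : ℝ) ^ e ≤ ((k : ℝ) + 1) ^ e :=
          Real.rpow_le_rpow_of_nonpos (by linarith) hlk he_neg.le
        calc β l ≤ μ₀ * (l : ℝ) ^ e := hrecl
          _ ≤ M * ((k : ℝ) + 1) ^ e :=
              mul_le_mul hMμ₀ h3 (Real.rpow_nonneg (Nat.cast_nonneg l) e) hMpos.le
      · -- case: bound by difference term
        rw [hcase] at hrecl
        by_contra hcon
        push_neg at hcon
        have hlm : l - m₁ = lbar + k * (m₁ + 1) + 1 := by
          have h4 : l = (lbar + k * (m₁ + 1) + 1) + m₁ := by rw [hl]; ring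
          rw [h4, Nat.add_sub_cancel]
        have hd0 : 0 ≤ β (l - m₁) - β l := sub_nonneg.2 (hβanti (Nat.sub_le l m₁))
        have hdle : β (l - m₁) - β l ≤ M * ((k : ℝ) ^ e - ((k : ℝ) + 1) ^ e) := by
          have h5 : β (l - m₁) ≤ β (lbar + k * (m₁ + 1)) := by rw [hlm]; exact hmono _
          have h6 := hcon
          nlinarith [ihk]
        have hbern : (k : ℝ) ^ e - ((k : ℝ) + 1) ^ e ≤ (-e) * (k : ℝ) ^ (e - 1) :=
          aux_bern hkR he_neg
        have hkpos : (0 : ℝ) < (k : ℝ) := by linarith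
        have hchain : β l ≤ M * ((k : ℝ) + 1) ^ e := by
          calc β l ≤ μ₀ * (β (l - m₁) - β l) ^ q := hrecl
            _ ≤ μ₀ * (M * ((-e) * (k : ℝ) ^ (e - 1))) ^ q := by
                refine mul_le_mul_of_nonneg_left ?_ hμ₀.le
                refine Real.rpow_le_rpow hd0 ?_ hq_pos.le
                exact hdle.trans (mul_le_mul_of_nonneg_left hbern hMpos.le)
            _ = μ₀ * M ^ q * (-e) ^ q * ((k : ℝ) ^ (e - 1)) ^ q := by
                rw [Real.mul_rpow hMpos.le (mul_nonneg (by linarith) (Real.rpow_nonneg hkpos.le _)),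
                  Real.mul_rpow (by linarith) (Real.rpow_nonneg hkpos.le _)]
                ring
            _ = μ₀ * M ^ q * (-e) ^ q * (k : ℝ) ^ e := by
                rw [← Real.rpow_mul hkpos.le, hkey]
            _ ≤ M * (2 : ℝ) ^ e * (k : ℝ) ^ e := by
                have h2e : (0 : ℝ) < (2 : ℝ) ^ e := Real.rpow_pos_of_pos two_pos e
                have hMq : (0 : ℝ) < M ^ q := Real.rpow_pos_of_pos hMpos q
                have hmul := mul_le_mul_of_nonneg_right hMX
                  (le_of_lt (mul_pos hMq h2e))
                have h2sum : (2 : ℝ) ^ (-e) * (2 : ℝ) ^ e = 1 := by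
                  rw [← Real.rpow_add two_pos]; simp
                have hL : X * (M ^ q * (2 : ℝ) ^ e) = μ₀ * M ^ q * (-e) ^ q := by
                  calc X * (M ^ q * (2 : ℝ) ^ e)
                      = μ₀ * M ^ q * (-e) ^ q * ((2 : ℝ) ^ (-e) * (2 : ℝ) ^ e) := by
                        rw [hX]; ring
                    _ = μ₀ * M ^ q * (-e) ^ q := by rw [h2sum, mul_one]
                have hR : M ^ (1 - q) * (M ^ q * (2 : ℝ) ^ e) = M * (2 : ℝ) ^ e := by
                  rw [← mul_assoc, ← Real.rpow_add hMpos]; norm_num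
                rw [hL, hR] at hmul
                exact mul_le_mul_of_nonneg_right hmul (Real.rpow_nonneg hkpos.le e)
            _ ≤ M * ((k : ℝ) + 1) ^ e := by
                have h7 : ((2 : ℝ) * (k : ℝ)) ^ e ≤ ((k : ℝ) + 1) ^ e :=
                  Real.rpow_le_rpow_of_nonpos (by linarith) (by linarith) he_neg.le
                rw [Real.mul_rpow (by norm_num) hkpos.le] at h7
                calc M * (2 : ℝ) ^ e * (k : ℝ) ^ e
                    = M * ((2 : ℝ) ^ e * (k : ℝ) ^ e) := by ring
                  _ ≤ M * ((k : ℝ) + 1) ^ e := mul_le_mul_of_nonneg_left h7 hMpos.le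
        linarith
  -- conclusion
  refine ⟨M ^ (1 / e), Real.rpow_pos_of_pos hMpos _, ?_⟩
  intro l hle2
  have hμhat : (M ^ (1 / e)) ^ e = M := by
    rw [← Real.rpow_mul hMpos.le, one_div, inv_mul_cancel₀ (ne_of_lt he_neg),
      Real.rpow_one]
  rw [hμhat, max_eq_right hMμ₀]
  set k := (l - lbar) / (m₁ + 1) with hk
  have hk1 : 1 ≤ k := by
    rw [hk]
    exact (Nat.one_le_div_iff (Nat.succ_pos m₁)).2 (by omega)
  have hlge : lbar + k * (m₁ + 1) ≤ l := by
    have h2 : k * (m₁ + 1) ≤ l - lbar := by rw [hk]; exact Nat.div_mul_le_self _ _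
    calc lbar + k * (m₁ + 1) ≤ lbar + (l - lbar) := Nat.add_le_add_left h2 _
      _ = l := by omega
  exact (hβanti hlge).trans (hγ k hk1)
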